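/- For m ≥ 5, let H = K_{m,m} \ E(C_{2m}) and let W be a resolving set of H. Then along the cycle C_{2m}, between any two cyclically consecutive vertices of W there are at most four vertices not in W (every gap of W contains at most four vertices). -/

import Mathlib

/-- `W` resolves `G`: every vertex is determined by its distance vector to `W`. -/
def Resolves {V : Type*} (G : SimpleGraph V) (W : Set V) : Prop :=
  ∀ u v : V, (∀ w ∈ W, G.dist u w = G.dist v w) → u = v

/-- Metric dimension: minimum cardinality of a (finite) resolving set. -/
noncomputable def metricDim {V : Type*} (G : SimpleGraph V) : ℕ :=
  sInf {k | ∃ W : Set V, W.Finite ∧ W.ncard = k ∧ Resolves G W}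
/-- `K_{m,m}` minus the Hamiltonian cycle `x₁ y₁ x₂ y₂ … x_m y_m x₁` (0-indexed:
cycle edges are `xᵢ yᵢ` and `yᵢ x_{i+1 mod m}`). -/
def cycGraph (m : ℕ) : SimpleGraph (Fin m ⊕ Fin m) where
  Adj u v := match u, v with
    | Sum.inl i, Sum.inr j => j ≠ i ∧ (i : ℕ) ≠ ((j : ℕ) + 1) % m
    | Sum.inr j, Sum.inl i => j ≠ i ∧ (i : ℕ) ≠ ((j : ℕ) + 1) % m
    | _, _ => False
  symm := ⟨by rintro (i|i) (j|j) h <;> exact h⟩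
  loopless := ⟨by rintro (i|i) h <;> exact h⟩

/-- Position `k` (taken mod `2m`) along the Hamiltonian cycle
`x₁ y₁ x₂ y₂ …`: even positions `2i ↦ xᵢ`, odd positions `2i+1 ↦ yᵢ`. -/
def cyc (m : ℕ) [NeZero m] (k : ℕ) : Fin m ⊕ Fin m :=
  if (k % (2 * m)) % 2 = 0 then
    Sum.inl ⟨k % (2 * m) / 2, by
      have hm : 0 < m := Nat.pos_of_ne_zero (NeZero.ne m)
      have h : k % (2 * m) < 2 * m := Nat.mod_lt _ (by omega)
      exact Nat.div_lt_of_lt_mul (by omega)⟩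
  else
    Sum.inr ⟨k % (2 * m) / 2, by
      have hm : 0 < m := Nat.pos_of_ne_zero (NeZero.ne m)
      have h : k % (2 * m) < 2 * m := Nat.mod_lt _ (by omega)
      exact Nat.div_lt_of_lt_mul (by omega)⟩

/-- `W` has a gap of exactly `L` vertices starting at cycle position `s`:
the positions `s` and `s+L+1` are in `W` and the `L` positions strictly between are not. -/
def IsGap (m : ℕ) [NeZero m] (W : Set (Fin m ⊕ Fin m)) (s L : ℕ) : Prop :=
  cyc m s ∈ W ∧ cyc m (s + L + 1) ∈ W ∧ ∀ t, 1 ≤ t → t ≤ L → cyc m (s + t) ∉ W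

lemma cyc_even (m : ℕ) [NeZero m] {k i : ℕ} (hi : i < m) (h : k % (2*m) = 2*i) :
    cyc m k = Sum.inl ⟨i, hi⟩ := by
  unfold cyc
  rw [if_pos (by rw [h]; omega)]
  congr 1
  ext
  simp [h]

lemma cyc_odd (m : ℕ) [NeZero m] {k i : ℕ} (hi : i < m) (h : k % (2*m) = 2*i+1) :
    cyc m k = Sum.inr ⟨i, hi⟩ := by
  unfold cyc
  rw [if_neg (by rw [h]; omega)]
  congr 1
  ext
  simp [h]
  omega

lemma exists_avoid (m p q r s : ℕ) (hm : 5 ≤ m) :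
    ∃ c < m, c ≠ p ∧ c ≠ q ∧ c ≠ r ∧ c ≠ s := by
  by_contra h
  push_neg at h
  have h0 := h 0 (by omega)
  have h1 := h 1 (by omega)
  have h2 := h 2 (by omega)
  have h3 := h 3 (by omega)
  have h4 := h 4 (by omega)
  omega

lemma adj_xy (m : ℕ) (i j : Fin m) :
    (cycGraph m).Adj (Sum.inl i) (Sum.inr j) ↔ j ≠ i ∧ (i : ℕ) ≠ ((j : ℕ) + 1) % m :=
  Iff.rfl

lemma graph_dist_one {V : Type*} {G : SimpleGraph V} {u v : V} (h : G.Adj u v) :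
    G.dist u v = 1 := (SimpleGraph.dist_eq_one_iff_adj).mpr h

lemma succ_mod_cases (m k : ℕ) (hm : 0 < m) (hk : k < m) :
    (k+1 < m ∧ (k+1)%m = k+1) ∨ (k+1 = m ∧ (k+1)%m = 0) := by
  rcases Nat.lt_or_ge (k+1) m with h | h
  · exact Or.inl ⟨h, Nat.mod_eq_of_lt h⟩
  · have h' : k+1 = m := by omega
    exact Or.inr ⟨h', by rw [h']; exact Nat.mod_self m⟩

lemma pred_of_succ (m a c : ℕ) (hm : 0 < m) (hc : c < m) (h : a = (c+1)%m) :
    c = (a + (m-1)) % m := by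
  rcases succ_mod_cases m c hm hc with ⟨h1, h2⟩ | ⟨h1, h2⟩
  · rw [h, h2, show c+1+(m-1) = m + c by omega, Nat.add_mod_left, Nat.mod_eq_of_lt hc]
  · rw [h, h2, Nat.zero_add, Nat.mod_eq_of_lt (by omega)]
    omega

lemma dist_two_xx (m : ℕ) (hm : 5 ≤ m) (a k : Fin m) (h : a ≠ k) :
    (cycGraph m).dist (Sum.inl a) (Sum.inl k) = 2 := by
  have hm0 : 0 < m := by omega
  obtain ⟨c, hcm, hc1, hc2, hc3, hc4⟩ :=
    exists_avoid m a k ((a + (m-1)) % m) ((k + (m-1)) % m) hm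
  have h1 : (cycGraph m).Adj (Sum.inl a) (Sum.inr ⟨c, hcm⟩) := by
    refine ⟨fun he => hc1 (by simpa using congrArg Fin.val he), fun he => ?_⟩
    exact hc3 (pred_of_succ m a c hm0 hcm he)
  have h2 : (cycGraph m).Adj (Sum.inl k) (Sum.inr ⟨c, hcm⟩) := by
    refine ⟨fun he => hc2 (by simpa using congrArg Fin.val he), fun he => ?_⟩
    exact hc4 (pred_of_succ m k c hm0 hcm he)
  have hle : (cycGraph m).dist (Sum.inl a) (Sum.inl k) ≤ 2 := by
    have := SimpleGraph.dist_le (SimpleGraph.Walk.cons h1 (SimpleGraph.Walk.cons h2.symm SimpleGraph.Walk.nil))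
    simpa using this
  have hne0 : (cycGraph m).dist (Sum.inl a) (Sum.inl k) ≠ 0 := by
    intro h0
    rcases SimpleGraph.dist_eq_zero_iff_eq_or_not_reachable.mp h0 with he | hnr
    · exact h (by simpa using he)
    · exact hnr (SimpleGraph.Walk.reachable
        (SimpleGraph.Walk.cons h1 (SimpleGraph.Walk.cons h2.symm SimpleGraph.Walk.nil)))
  have hne1 : (cycGraph m).dist (Sum.inl a) (Sum.inl k) ≠ 1 := by
    intro h1'
    exact SimpleGraph.dist_eq_one_iff_adj.mp h1'
  omega

lemma dist_two_yy (m : ℕ) (hm : 5 ≤ m) (a k : Fin m) (h : a ≠ k) :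
    (cycGraph m).dist (Sum.inr a) (Sum.inr k) = 2 := by
  obtain ⟨c, hcm, hc1, hc2, hc3, hc4⟩ :=
    exists_avoid m a k (((a:ℕ)+1) % m) (((k:ℕ)+1) % m) hm
  have h1 : (cycGraph m).Adj (Sum.inr a) (Sum.inl ⟨c, hcm⟩) := by
    exact ⟨fun he => hc1 (by simpa using (congrArg Fin.val he).symm), hc3⟩
  have h2 : (cycGraph m).Adj (Sum.inr k) (Sum.inl ⟨c, hcm⟩) := by
    exact ⟨fun he => hc2 (by simpa using (congrArg Fin.val he).symm), hc4⟩
  have hle : (cycGraph m).dist (Sum.inr a) (Sum.inr k) ≤ 2 := by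
    have := SimpleGraph.dist_le (SimpleGraph.Walk.cons h1 (SimpleGraph.Walk.cons h2.symm SimpleGraph.Walk.nil))
    simpa using this
  have hne0 : (cycGraph m).dist (Sum.inr a) (Sum.inr k) ≠ 0 := by
    intro h0
    rcases SimpleGraph.dist_eq_zero_iff_eq_or_not_reachable.mp h0 with he | hnr
    · exact h (by simpa using he)
    · exact hnr (SimpleGraph.Walk.reachable
        (SimpleGraph.Walk.cons h1 (SimpleGraph.Walk.cons h2.symm SimpleGraph.Walk.nil)))
  have hne1 : (cycGraph m).dist (Sum.inr a) (Sum.inr k) ≠ 1 := by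
    intro h1'
    exact SimpleGraph.dist_eq_one_iff_adj.mp h1'
  omega

lemma coreA (m : ℕ) [NeZero m] (hm : 5 ≤ m) (W : Set (Fin m ⊕ Fin m))
    (hW : Resolves (cycGraph m) W) (a a' c : Fin m)
    (ha' : (a':ℕ) = ((a:ℕ)+1) % m) (hc : (a:ℕ) = ((c:ℕ)+1) % m)
    (hu : Sum.inl a ∉ W) (hv : Sum.inl a' ∉ W) (h1 : Sum.inr c ∉ W)
    (h3 : Sum.inr a ∉ W) (h5 : Sum.inr a' ∉ W) : False := by
  have hm0 : 0 < m := by omega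
  have hane : a ≠ a' := by
    intro h
    rw [← h] at ha'
    rcases succ_mod_cases m a hm0 a.isLt with ⟨hx, hy⟩ | ⟨hx, hy⟩ <;> omega
  apply hane
  have key : Sum.inl a = (Sum.inl a' : Fin m ⊕ Fin m) := by
    apply hW
    intro w hw
    match w with
    | Sum.inl k =>
        have hk1 : a ≠ k := fun h => hu (h ▸ hw)
        have hk2 : a' ≠ k := fun h => hv (h ▸ hw)
        rw [dist_two_xx m hm a k hk1, dist_two_xx m hm a' k hk2]
    | Sum.inr k =>
        have hk3 : k ≠ a := fun h => h3 (h ▸ hw)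
        have hk5 : k ≠ a' := fun h => h5 (h ▸ hw)
        have hk1 : k ≠ c := fun h => h1 (h ▸ hw)
        have hadj1 : (cycGraph m).Adj (Sum.inl a) (Sum.inr k) := by
          refine ⟨hk3, fun he => ?_⟩
          have e1 := pred_of_succ m (a:ℕ) (k:ℕ) hm0 k.isLt he
          have e2 := pred_of_succ m (a:ℕ) (c:ℕ) hm0 c.isLt hc
          exact hk1 (Fin.ext (by rw [e1, e2]))
        have hadj2 : (cycGraph m).Adj (Sum.inl a') (Sum.inr k) := by
          refine ⟨hk5, fun he => ?_⟩
          rw [ha'] at he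
          rcases succ_mod_cases m a hm0 a.isLt with ⟨hx, hy⟩ | ⟨hx, hy⟩ <;>
            rcases succ_mod_cases m k hm0 k.isLt with ⟨hx', hy'⟩ | ⟨hx', hy'⟩ <;>
            exact hk3 (Fin.ext (by omega))
        rw [graph_dist_one hadj1, graph_dist_one hadj2]
  injection key

lemma coreB (m : ℕ) [NeZero m] (hm : 5 ≤ m) (W : Set (Fin m ⊕ Fin m))
    (hW : Resolves (cycGraph m) W) (a a' a'' : Fin m)
    (ha' : (a':ℕ) = ((a:ℕ)+1) % m) (ha'' : (a'':ℕ) = ((a':ℕ)+1) % m)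
    (h1 : Sum.inl a ∉ W) (hu : Sum.inr a ∉ W) (h3 : Sum.inl a' ∉ W)
    (hv : Sum.inr a' ∉ W) (h5 : Sum.inl a'' ∉ W) : False := by
  have hm0 : 0 < m := by omega
  have hane : a ≠ a' := by
    intro h
    rw [← h] at ha'
    rcases succ_mod_cases m a hm0 a.isLt with ⟨hx, hy⟩ | ⟨hx, hy⟩ <;> omega
  apply hane
  have key : Sum.inr a = (Sum.inr a' : Fin m ⊕ Fin m) := by
    apply hW
    intro w hw
    match w with
    | Sum.inr k =>
        have hk1 : a ≠ k := fun h => hu (h ▸ hw)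
        have hk2 : a' ≠ k := fun h => hv (h ▸ hw)
        rw [dist_two_yy m hm a k hk1, dist_two_yy m hm a' k hk2]
    | Sum.inl k =>
        have hka : k ≠ a := fun h => h1 (h ▸ hw)
        have hka' : k ≠ a' := fun h => h3 (h ▸ hw)
        have hka'' : k ≠ a'' := fun h => h5 (h ▸ hw)
        have hadj1 : (cycGraph m).Adj (Sum.inr a) (Sum.inl k) := by
          refine ⟨fun h => hka (Fin.ext (congrArg Fin.val h).symm), fun he => ?_⟩
          exact hka' (Fin.ext (by rw [he, ha']))
        have hadj2 : (cycGraph m).Adj (Sum.inr a') (Sum.inl k) := by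
          refine ⟨fun h => hka' (Fin.ext (congrArg Fin.val h).symm), fun he => ?_⟩
          exact hka'' (Fin.ext (by rw [he, ha'']))
        rw [graph_dist_one hadj1, graph_dist_one hadj2]
  injection key


/-- for `m ≥ 5`, every gap of a resolving set of
`K_{m,m} \ E(C_{2m})` contains at most four vertices. -/
theorem stmt7 (m : ℕ) [NeZero m] (hm : 5 ≤ m) (W : Set (Fin m ⊕ Fin m))
    (hW : Resolves (cycGraph m) W) (s L : ℕ) (hg : IsGap m W s L) : L ≤ 4 := by
  by_contra hL
  push_neg at hL
  obtain ⟨-, -, hgap⟩ := hg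
  have hni : ∀ t, 1 ≤ t → t ≤ 5 → cyc m (s+t) ∉ W := fun t h1 h5 => hgap t h1 (by omega)
  have hn : 0 < 2*m := by omega
  set r := (s+1) % (2*m) with hr'
  have hr : r < 2*m := Nat.mod_lt _ hn
  have e2 : (s+2) % (2*m) = (r + 1) % (2*m) := by
    rw [show s+2 = (s+1)+1 by omega, Nat.add_mod (s+1) 1, Nat.mod_eq_of_lt (show 1 < 2*m by omega)]
  have e3 : (s+3) % (2*m) = (r + 2) % (2*m) := by
    rw [show s+3 = (s+1)+2 by omega, Nat.add_mod (s+1) 2, Nat.mod_eq_of_lt (show 2 < 2*m by omega)]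
  have e4 : (s+4) % (2*m) = (r + 3) % (2*m) := by
    rw [show s+4 = (s+1)+3 by omega, Nat.add_mod (s+1) 3, Nat.mod_eq_of_lt (show 3 < 2*m by omega)]
  have e5 : (s+5) % (2*m) = (r + 4) % (2*m) := by
    rw [show s+5 = (s+1)+4 by omega, Nat.add_mod (s+1) 4, Nat.mod_eq_of_lt (show 4 < 2*m by omega)]
  have g1 := hni 1 (by omega) (by omega)
  have g2 := hni 2 (by omega) (by omega)
  have g3 := hni 3 (by omega) (by omega)
  have g4 := hni 4 (by omega) (by omega)
  have g5 := hni 5 (by omega) (by omega)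
  have hcase : r + 4 < 2*m ∨ r = 2*m-4 ∨ r = 2*m-3 ∨ r = 2*m-2 ∨ r = 2*m-1 := by omega
  rcases hcase with hc | hc | hc | hc | hc
  · -- no wrap
    have v2 : (s+2) % (2*m) = r + 1 := by rw [e2]; exact Nat.mod_eq_of_lt (by omega)
    have v3 : (s+3) % (2*m) = r + 2 := by rw [e3]; exact Nat.mod_eq_of_lt (by omega)
    have v4 : (s+4) % (2*m) = r + 3 := by rw [e4]; exact Nat.mod_eq_of_lt (by omega)
    have v5 : (s+5) % (2*m) = r + 4 := by rw [e5]; exact Nat.mod_eq_of_lt (by omega)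
    rcases Nat.even_or_odd r with ⟨a, ha⟩ | ⟨a, ha⟩
    · -- r = 2a even : pattern x y x y x, use coreB with a, a+1, a+2
      rw [cyc_even (m := m) (show a < m by omega) (by omega)] at g1
      rw [cyc_odd (m := m) (show a < m by omega) (by rw [v2]; try omega)] at g2
      rw [cyc_even (m := m) (show a+1 < m by omega) (by rw [v3]; try omega)] at g3
      rw [cyc_odd (m := m) (show a+1 < m by omega) (by rw [v4]; try omega)] at g4
      rw [cyc_even (m := m) (show a+2 < m by omega) (by rw [v5]; try omega)] at g5
      exact coreB m hm W hW ⟨a, by omega⟩ ⟨a+1, by omega⟩ ⟨a+2, by omega⟩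
        (Eq.symm (Nat.mod_eq_of_lt (show a+1 < m by omega)))
        (Eq.symm (Nat.mod_eq_of_lt (show a+1+1 < m by omega)))
        g1 g2 g3 g4 g5
    · -- r = 2a+1 odd : pattern y x y x y, use coreA with a+1, a+2, a
      rw [cyc_odd (m := m) (show a < m by omega) (by omega)] at g1
      rw [cyc_even (m := m) (show a+1 < m by omega) (by rw [v2]; try omega)] at g2
      rw [cyc_odd (m := m) (show a+1 < m by omega) (by rw [v3]; try omega)] at g3
      rw [cyc_even (m := m) (show a+2 < m by omega) (by rw [v4]; try omega)] at g4
      rw [cyc_odd (m := m) (show a+2 < m by omega) (by rw [v5]; try omega)] at g5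
      exact coreA m hm W hW ⟨a+1, by omega⟩ ⟨a+2, by omega⟩ ⟨a, by omega⟩
        (Eq.symm (Nat.mod_eq_of_lt (show a+1+1 < m by omega)))
        (Eq.symm (Nat.mod_eq_of_lt (show a+1 < m by omega)))
        g2 g4 g1 g3 g5
  · -- r = 2m-4 : wrap at position 5
    have v2 : (s+2) % (2*m) = r + 1 := by rw [e2]; exact Nat.mod_eq_of_lt (by omega)
    have v3 : (s+3) % (2*m) = r + 2 := by rw [e3]; exact Nat.mod_eq_of_lt (by omega)
    have v4 : (s+4) % (2*m) = r + 3 := by rw [e4]; exact Nat.mod_eq_of_lt (by omega)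
    have v5 : (s+5) % (2*m) = 0 := by rw [e5, show r+4 = 2*m by omega, Nat.mod_self]
    rw [cyc_even (m := m) (show m-2 < m by omega) (by omega)] at g1
    rw [cyc_odd (m := m) (show m-2 < m by omega) (by rw [v2]; try omega)] at g2
    rw [cyc_even (m := m) (show m-1 < m by omega) (by rw [v3]; try omega)] at g3
    rw [cyc_odd (m := m) (show m-1 < m by omega) (by rw [v4]; try omega)] at g4
    rw [cyc_even (m := m) (show 0 < m by omega) (by rw [v5]; try omega)] at g5
    refine coreB m hm W hW ⟨m-2, by omega⟩ ⟨m-1, by omega⟩ ⟨0, by omega⟩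
      ?_ ?_ g1 g2 g3 g4 g5
    · show (m-1:ℕ) = (m-2+1) % m
      rw [show m-2+1 = m-1 by omega, Nat.mod_eq_of_lt (by omega)]
    · show (0:ℕ) = (m-1+1) % m
      rw [show m-1+1 = m by omega, Nat.mod_self]
  · -- r = 2m-3 : wrap at positions 4,5
    have v2 : (s+2) % (2*m) = r + 1 := by rw [e2]; exact Nat.mod_eq_of_lt (by omega)
    have v3 : (s+3) % (2*m) = r + 2 := by rw [e3]; exact Nat.mod_eq_of_lt (by omega)
    have v4 : (s+4) % (2*m) = 0 := by rw [e4, show r+3 = 2*m by omega, Nat.mod_self]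
    have v5 : (s+5) % (2*m) = 1 := by
      rw [e5, show r+4 = 2*m+1 by omega, Nat.add_mod_left, Nat.mod_eq_of_lt (by omega)]
    rw [cyc_odd (m := m) (show m-2 < m by omega) (by omega)] at g1
    rw [cyc_even (m := m) (show m-1 < m by omega) (by rw [v2]; try omega)] at g2
    rw [cyc_odd (m := m) (show m-1 < m by omega) (by rw [v3]; try omega)] at g3
    rw [cyc_even (m := m) (show 0 < m by omega) (by rw [v4]; try omega)] at g4
    rw [cyc_odd (m := m) (show 0 < m by omega) (by rw [v5]; try omega)] at g5
    refine coreA m hm W hW ⟨m-1, by omega⟩ ⟨0, by omega⟩ ⟨m-2, by omega⟩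
      ?_ ?_ g2 g4 g1 g3 g5
    · show (0:ℕ) = (m-1+1) % m
      rw [show m-1+1 = m by omega, Nat.mod_self]
    · show (m-1:ℕ) = (m-2+1) % m
      rw [show m-2+1 = m-1 by omega, Nat.mod_eq_of_lt (by omega)]
  · -- r = 2m-2 : wrap at positions 3,4,5
    have v2 : (s+2) % (2*m) = r + 1 := by rw [e2]; exact Nat.mod_eq_of_lt (by omega)
    have v3 : (s+3) % (2*m) = 0 := by rw [e3, show r+2 = 2*m by omega, Nat.mod_self]
    have v4 : (s+4) % (2*m) = 1 := by
      rw [e4, show r+3 = 2*m+1 by omega, Nat.add_mod_left, Nat.mod_eq_of_lt (by omega)]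
    have v5 : (s+5) % (2*m) = 2 := by
      rw [e5, show r+4 = 2*m+2 by omega, Nat.add_mod_left, Nat.mod_eq_of_lt (by omega)]
    rw [cyc_even (m := m) (show m-1 < m by omega) (by omega)] at g1
    rw [cyc_odd (m := m) (show m-1 < m by omega) (by rw [v2]; try omega)] at g2
    rw [cyc_even (m := m) (show 0 < m by omega) (by rw [v3]; try omega)] at g3
    rw [cyc_odd (m := m) (show 0 < m by omega) (by rw [v4]; try omega)] at g4
    rw [cyc_even (m := m) (show 1 < m by omega) (by rw [v5]; try omega)] at g5
    refine coreB m hm W hW ⟨m-1, by omega⟩ ⟨0, by omega⟩ ⟨1, by omega⟩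
      ?_ ?_ g1 g2 g3 g4 g5
    · show (0:ℕ) = (m-1+1) % m
      rw [show m-1+1 = m by omega, Nat.mod_self]
    · show (1:ℕ) = (0+1) % m
      rw [Nat.mod_eq_of_lt (by omega)]
  · -- r = 2m-1 : wrap at positions 2..5
    have v2 : (s+2) % (2*m) = 0 := by rw [e2, show r+1 = 2*m by omega, Nat.mod_self]
    have v3 : (s+3) % (2*m) = 1 := by
      rw [e3, show r+2 = 2*m+1 by omega, Nat.add_mod_left, Nat.mod_eq_of_lt (by omega)]
    have v4 : (s+4) % (2*m) = 2 := by
      rw [e4, show r+3 = 2*m+2 by omega, Nat.add_mod_left, Nat.mod_eq_of_lt (by omega)]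
    have v5 : (s+5) % (2*m) = 3 := by
      rw [e5, show r+4 = 2*m+3 by omega, Nat.add_mod_left, Nat.mod_eq_of_lt (by omega)]
    rw [cyc_odd (m := m) (show m-1 < m by omega) (by omega)] at g1
    rw [cyc_even (m := m) (show 0 < m by omega) (by rw [v2]; try omega)] at g2
    rw [cyc_odd (m := m) (show 0 < m by omega) (by rw [v3]; try omega)] at g3
    rw [cyc_even (m := m) (show 1 < m by omega) (by rw [v4]; try omega)] at g4
    rw [cyc_odd (m := m) (show 1 < m by omega) (by rw [v5]; try omega)] at g5
    refine coreA m hm W hW ⟨0, by omega⟩ ⟨1, by omega⟩ ⟨m-1, by omega⟩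
      ?_ ?_ g2 g4 g1 g3 g5
    · show (1:ℕ) = (0+1) % m
      rw [Nat.mod_eq_of_lt (by omega)]
    · show (0:ℕ) = (m-1+1) % m
      rw [show m-1+1 = m by omega, Nat.mod_self]
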